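/- For every odd v ≥ 1, the edge set of the complete graph K_{v+7} can be partitioned into v+7 triangles and v perfect matchings; in particular, each vertex lies in exactly three of the triangles. -/

import Mathlib

open Finset

lemma sum_eq_card_forces_one {α : Type} [DecidableEq α] (s : Finset α) (f : α → ℕ)
    (hsum : ∑ p ∈ s, f p = s.card) (hge : ∀ p ∈ s, 1 ≤ f p) :
    ∀ p ∈ s, f p = 1 := by
  by_contra hcon
  push_neg at hcon
  obtain ⟨p0, hp0, hne⟩ := hcon
  have hlt : ∑ p ∈ s, (1 : ℕ) < ∑ p ∈ s, f p := by
    apply Finset.sum_lt_sum (fun i hi => hge i hi)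
    exact ⟨p0, hp0, lt_of_le_of_ne (hge p0 hp0) (Ne.symm hne)⟩
  simp only [Finset.sum_const, smul_eq_mul, mul_one] at hlt
  omega

lemma sum_eq_card_forces_three {α : Type} [DecidableEq α] (s : Finset α) (f : α → ℕ)
    (hsum : ∑ p ∈ s, f p = 3 * s.card) (hge : ∀ p ∈ s, 3 ≤ f p) :
    ∀ p ∈ s, f p = 3 := by
  by_contra hcon
  push_neg at hcon
  obtain ⟨p0, hp0, hne⟩ := hcon
  have hlt : ∑ p ∈ s, (3 : ℕ) < ∑ p ∈ s, f p := by
    apply Finset.sum_lt_sum (fun i hi => hge i hi)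
    exact ⟨p0, hp0, lt_of_le_of_ne (hge p0 hp0) (Ne.symm hne)⟩
  simp only [Finset.sum_const, smul_eq_mul] at hlt
  omega

/-- Abstract counting lemma: a family of 3-element sets and fixed-point-free involutions
covering every pair at least once, with the right counts, covers exactly once. -/
lemma main_abstract {V : Type} [Fintype V] [DecidableEq V] (v : ℕ)
    (hcard : Fintype.card V = v + 7)
    (T : Fin (v+7) → Finset V) (M : Fin v → V → V)
    (hT3 : ∀ i, (T i).card = 3)
    (hM1 : ∀ k x, M k x ≠ x) (hM2 : ∀ k x, M k (M k x) = x)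
    (hcov : ∀ x y : V, x ≠ y → (∃ i, x ∈ T i ∧ y ∈ T i) ∨ ∃ k, M k x = y)
    (hv3 : ∀ x : V, 3 ≤ (univ.filter (fun i => x ∈ T i)).card) :
    (∀ x y : V, x ≠ y →
      (univ.filter (fun i => x ∈ T i ∧ y ∈ T i)).card +
      (univ.filter (fun k => M k x = y)).card = 1) ∧
    ∀ x : V, (univ.filter (fun i => x ∈ T i)).card = 3 := by
  classical
  have hcV : (univ : Finset V).card = v + 7 := by simpa using hcard
  constructor
  · -- pair coverage
    have h1 : ∑ p ∈ (univ : Finset V).offDiag,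
        (univ.filter (fun i => p.1 ∈ T i ∧ p.2 ∈ T i)).card = (v+7) * 6 := by
      simp_rw [Finset.card_filter]
      rw [Finset.sum_comm]
      have key : ∀ i : Fin (v+7), ∑ p ∈ (univ : Finset V).offDiag,
          (if p.1 ∈ T i ∧ p.2 ∈ T i then 1 else 0) = 6 := by
        intro i
        rw [← Finset.card_filter]
        have he : ((univ : Finset V).offDiag.filter (fun p => p.1 ∈ T i ∧ p.2 ∈ T i))
            = (T i).offDiag := by
          ext ⟨a, b⟩
          simp only [Finset.mem_filter, Finset.mem_offDiag, Finset.mem_univ, true_and]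
          tauto
        rw [he, Finset.offDiag_card, hT3]
      rw [Finset.sum_congr rfl (fun i _ => key i)]
      simp [mul_comm]
    have h2 : ∑ p ∈ (univ : Finset V).offDiag,
        (univ.filter (fun k => M k p.1 = p.2)).card = v * (v+7) := by
      simp_rw [Finset.card_filter]
      rw [Finset.sum_comm]
      have key : ∀ k : Fin v, ∑ p ∈ (univ : Finset V).offDiag,
          (if M k p.1 = p.2 then 1 else 0) = v + 7 := by
        intro k
        rw [← Finset.card_filter]
        have he : ((univ : Finset V).offDiag.filter (fun p => M k p.1 = p.2))
            = univ.image (fun x => (x, M k x)) := by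
          ext ⟨a, b⟩
          simp only [Finset.mem_filter, Finset.mem_offDiag, Finset.mem_univ, true_and,
            Finset.mem_image]
          constructor
          · rintro ⟨hab, hM⟩; exact ⟨a, by rw [hM]⟩
          · rintro ⟨x, hx⟩
            have hx1 : x = a := congrArg Prod.fst hx
            have hx2 : M k x = b := congrArg Prod.snd hx
            subst hx1
            exact ⟨fun h => hM1 k x (by rw [hx2, ← h]), hx2⟩
        rw [he, Finset.card_image_of_injective _ (fun a b hab => (Prod.ext_iff.mp hab).1), hcV]
      rw [Finset.sum_congr rfl (fun k _ => key k)]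
      simp [mul_comm]
    have htot : ∑ p ∈ (univ : Finset V).offDiag,
        ((univ.filter (fun i => p.1 ∈ T i ∧ p.2 ∈ T i)).card +
         (univ.filter (fun k => M k p.1 = p.2)).card) = ((univ : Finset V).offDiag).card := by
      rw [Finset.sum_add_distrib, h1, h2, Finset.offDiag_card, hcV]
      ring_nf
      omega
    have hge : ∀ p ∈ (univ : Finset V).offDiag,
        1 ≤ (univ.filter (fun i => p.1 ∈ T i ∧ p.2 ∈ T i)).card +
            (univ.filter (fun k => M k p.1 = p.2)).card := by
      rintro ⟨a, b⟩ hab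
      rw [Finset.mem_offDiag] at hab
      dsimp only
      rcases hcov a b hab.2.2 with ⟨i, hi⟩ | ⟨k, hk⟩
      · have : i ∈ univ.filter (fun i => a ∈ T i ∧ b ∈ T i) := by
          simp [Finset.mem_filter, hi]
        have := Finset.card_pos.mpr ⟨i, this⟩
        omega
      · have : k ∈ univ.filter (fun k => M k a = b) := by
          simp [Finset.mem_filter, hk]
        have := Finset.card_pos.mpr ⟨k, this⟩
        omega
    intro x y hxy
    have hmem : (x, y) ∈ (univ : Finset V).offDiag := by
      rw [Finset.mem_offDiag]; exact ⟨Finset.mem_univ _, Finset.mem_univ _, hxy⟩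
    exact sum_eq_card_forces_one _ _ htot hge (x, y) hmem
  · -- vertex degree
    have h1 : ∑ x ∈ (univ : Finset V), (univ.filter (fun i => x ∈ T i)).card
        = 3 * ((univ : Finset V)).card := by
      simp_rw [Finset.card_filter]
      rw [Finset.sum_comm]
      have key : ∀ i : Fin (v+7), ∑ x ∈ (univ : Finset V),
          (if x ∈ T i then 1 else 0) = 3 := by
        intro i
        rw [← Finset.card_filter]
        have : (univ.filter (fun x => x ∈ T i)) = T i := by
          ext a; simp
        rw [this, hT3]
      rw [Finset.sum_congr rfl (fun i _ => key i)]
      simp [hcV, mul_comm]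
    intro x
    exact sum_eq_card_forces_three _ _ h1 (fun p _ => hv3 p) x (Finset.mem_univ x)



section Helpers

/-- cast-distinctness helper -/
lemma cast_ne_cast {h : ℕ} (a b : ℕ) (ha : a < h) (hb : b < h) (hne : a ≠ b) :
    (a : ZMod h) ≠ (b : ZMod h) := by
  intro hab
  have : NeZero h := ⟨by omega⟩
  have h1 : ((a : ZMod h)).val = a := ZMod.val_cast_of_lt ha
  have h2 : ((b : ZMod h)).val = b := ZMod.val_cast_of_lt hb
  rw [hab, h2] at h1
  exact hne h1.symm

lemma natCast_zmod_val {h : ℕ} [NeZero h] (t : ZMod h) : ((t.val : ℕ) : ZMod h) = t :=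
  ZMod.natCast_rightInverse t

/-- generic crossing matching -/
def muF {h : ℕ} (c : ZMod h) (x : Bool × ZMod h) : Bool × ZMod h :=
  if x.1 then (false, x.2 - c) else (true, x.2 + c)

lemma muF_ne {h : ℕ} (c : ZMod h) (x : Bool × ZMod h) : muF c x ≠ x := by
  obtain ⟨b, t⟩ := x
  cases b <;> simp [muF]

lemma muF_invol {h : ℕ} (c : ZMod h) (x : Bool × ZMod h) : muF c (muF c x) = x := by
  obtain ⟨b, t⟩ := x
  cases b <;> simp [muF]

lemma val_eq_cast_iff {h : ℕ} [NeZero h] (t : ZMod h) (a : ℕ) (ha : a < h) :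
    t.val = a ↔ t = (a : ZMod h) := by
  constructor
  · intro hv; rw [← natCast_zmod_val t, hv]
  · intro ht; rw [ht]; exact ZMod.val_cast_of_lt ha

end Helpers

section OddCase

/-- starter matching for `h = 2s+1` odd -/
def pOdd (s : ℕ) (x : Bool × ZMod (2*s+1)) : Bool × ZMod (2*s+1) :=
  if x.2.val = 0 then (!x.1, (s : ZMod (2*s+1)))
  else if x.2.val = s then (!x.1, 0)
  else if x.2.val = s+1 then (!x.1, x.2)
  else (x.1, -x.2)



variable {s : ℕ}

lemma pOdd_at0 (hs : 3 ≤ s) (b : Bool) : pOdd s (b, 0) = (!b, (s : ZMod (2*s+1))) := by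
  have hne : NeZero (2*s+1) := ⟨by omega⟩
  simp [pOdd]

lemma pOdd_atS (hs : 3 ≤ s) (b : Bool) : pOdd s (b, (s : ZMod (2*s+1))) = (!b, 0) := by
  have hne : NeZero (2*s+1) := ⟨by omega⟩
  have hvs : ((s : ZMod (2*s+1))).val = s := ZMod.val_cast_of_lt (by omega)
  simp only [pOdd, hvs]
  rw [if_neg (by omega)]; simp

lemma pOdd_atS1 (hs : 3 ≤ s) (b : Bool) :
    pOdd s (b, ((s+1 : ℕ) : ZMod (2*s+1))) = (!b, ((s+1 : ℕ) : ZMod (2*s+1))) := by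
  have hne : NeZero (2*s+1) := ⟨by omega⟩
  have hvs1 : (((s+1:ℕ) : ZMod (2*s+1))).val = s+1 := ZMod.val_cast_of_lt (by omega)
  simp only [pOdd, hvs1]
  rw [if_neg (by omega), if_neg (by omega)]; simp

lemma pOdd_gen (b : Bool) (t : ZMod (2*s+1))
    (h0 : t.val ≠ 0) (h1 : t.val ≠ s) (h2 : t.val ≠ s+1) :
    pOdd s (b, t) = (b, -t) := by
  simp only [pOdd]
  rw [if_neg h0, if_neg h1, if_neg h2]

lemma pOdd_invol (hs : 3 ≤ s) (x : Bool × ZMod (2*s+1)) : pOdd s (pOdd s x) = x := by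
  have hne : NeZero (2*s+1) := ⟨by omega⟩
  obtain ⟨b, t⟩ := x
  have hvs : ((s : ZMod (2*s+1))).val = s := ZMod.val_cast_of_lt (by omega)
  by_cases h0 : t.val = 0
  · have ht : t = 0 := by rwa [ZMod.val_eq_zero] at h0
    subst ht
    rw [pOdd_at0 hs, pOdd_atS hs, Bool.not_not]
  · by_cases h1 : t.val = s
    · have ht : t = (s : ZMod (2*s+1)) := by rw [← natCast_zmod_val t, h1]
      subst ht
      rw [pOdd_atS hs, pOdd_at0 hs, Bool.not_not]
    · by_cases h2 : t.val = s+1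
      · have ht : t = ((s+1:ℕ) : ZMod (2*s+1)) := by rw [← natCast_zmod_val t, h2]
        subst ht
        rw [pOdd_atS1 hs, pOdd_atS1 hs, Bool.not_not]
      · have htne : t ≠ 0 := by rwa [ZMod.val_eq_zero] at h0
        have hnv : (-t).val = 2*s+1 - t.val := by
          rw [ZMod.neg_val]; simp [htne]
        have hlt := t.val_lt
        rw [pOdd_gen b t h0 h1 h2,
          pOdd_gen b (-t) (by omega) (by omega) (by omega), neg_neg]

lemma pOdd_ne (hs : 3 ≤ s) (x : Bool × ZMod (2*s+1)) : pOdd s x ≠ x := by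
  have hne : NeZero (2*s+1) := ⟨by omega⟩
  obtain ⟨b, t⟩ := x
  by_cases h0 : t.val = 0
  · have ht : t = 0 := by rwa [ZMod.val_eq_zero] at h0
    subst ht; rw [pOdd_at0 hs]; simp
  · by_cases h1 : t.val = s
    · have ht : t = (s : ZMod (2*s+1)) := by rw [← natCast_zmod_val t, h1]
      subst ht; rw [pOdd_atS hs]; simp
    · by_cases h2 : t.val = s+1
      · have ht : t = ((s+1:ℕ) : ZMod (2*s+1)) := by rw [← natCast_zmod_val t, h2]
        subst ht; rw [pOdd_atS1 hs]; simp
      · rw [pOdd_gen b t h0 h1 h2]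
        intro hcon
        have hteq : -t = t := (Prod.ext_iff.mp hcon).2
        have htne : t ≠ 0 := by rwa [ZMod.val_eq_zero] at h0
        have hnv : (-t).val = 2*s+1 - t.val := by
          rw [ZMod.neg_val]; simp [htne]
        have := congrArg ZMod.val hteq
        rw [hnv] at this
        have hlt := t.val_lt
        omega

end OddCase

section RhoGeneric

/-- rotation of a starter involution -/
def rhoF {h : ℕ} (p : Bool × ZMod h → Bool × ZMod h) (j : ZMod h) (x : Bool × ZMod h) :
    Bool × ZMod h :=
  ((p (x.1, x.2 - j)).1, (p (x.1, x.2 - j)).2 + j)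

lemma rhoF_invol {h : ℕ} (p : Bool × ZMod h → Bool × ZMod h)
    (hp : ∀ x, p (p x) = x) (j : ZMod h) (x : Bool × ZMod h) :
    rhoF p j (rhoF p j x) = x := by
  obtain ⟨b, t⟩ := x
  simp only [rhoF, add_sub_cancel_right, Prod.mk.eta, hp, sub_add_cancel]

lemma rhoF_ne {h : ℕ} (p : Bool × ZMod h → Bool × ZMod h)
    (hp : ∀ x, p x ≠ x) (j : ZMod h) (x : Bool × ZMod h) :
    rhoF p j x ≠ x := by
  obtain ⟨b, t⟩ := x
  intro hcon
  have h1 := congrArg Prod.fst hcon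
  have h2 := congrArg Prod.snd hcon
  simp only [rhoF] at h1 h2
  apply hp (b, t - j)
  apply Prod.ext h1
  show (p (b, t - j)).2 = t - j
  rw [eq_sub_iff_add_eq]
  exact h2

end RhoGeneric

section TriGeneric
/-- the two triangle orbits -/
def XT (h : ℕ) (t : ZMod h) : Finset (Bool × ZMod h) :=
  {(false, t), (true, t+1), (true, t+2)}
def YT (h : ℕ) (t : ZMod h) : Finset (Bool × ZMod h) :=
  {(true, t), (false, t+1), (false, t+2)}

lemma one_ne_two_zmod {h : ℕ} (hh : 7 ≤ h) : (1 : ZMod h) ≠ 2 := by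
  have := cast_ne_cast (h := h) 1 2 (by omega) (by omega) (by omega)
  simpa using this

lemma XT_card {h : ℕ} (hh : 7 ≤ h) (t : ZMod h) : (XT h t).card = 3 := by
  have h12 : t + 1 ≠ t + 2 := by
    intro hc
    exact one_ne_two_zmod hh (by exact add_left_cancel hc)
  rw [XT, Finset.card_insert_of_notMem (by simp), Finset.card_insert_of_notMem (by simp [h12]),
    Finset.card_singleton]

lemma YT_card {h : ℕ} (hh : 7 ≤ h) (t : ZMod h) : (YT h t).card = 3 := by
  have h12 : t + 1 ≠ t + 2 := by
    intro hc
    exact one_ne_two_zmod hh (by exact add_left_cancel hc)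
  rw [YT, Finset.card_insert_of_notMem (by simp), Finset.card_insert_of_notMem (by simp [h12]),
    Finset.card_singleton]

/-- the triangle family, indexed by `Fin (v+7)` where `v+7 = 2h` -/
def TF (h v : ℕ) : Fin (v+7) → Finset (Bool × ZMod h) := fun i =>
  if i.val < h then XT h ((i.val : ℕ) : ZMod h)
  else YT h (((i.val - h : ℕ) : ℕ) : ZMod h)

lemma TF_card {h v : ℕ} (hh : 7 ≤ h) (i : Fin (v+7)) : (TF h v i).card = 3 := by
  unfold TF
  split
  · exact XT_card hh _
  · exact YT_card hh _

/-- every vertex is in at least three triangles -/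
lemma TF_deg {h v : ℕ} [NeZero h] (hh : 7 ≤ h) (hv : v + 7 = 2*h) (x : Bool × ZMod h) :
    3 ≤ (univ.filter (fun i => x ∈ TF h v i)).card := by
  obtain ⟨b, t⟩ := x
  have hvlt := t.val_lt
  have hv1 := (t-1).val_lt
  have hv2 := (t-2).val_lt
  have h12 : (t - 1) ≠ (t - 2) := by
    intro hc
    exact one_ne_two_zmod hh (by linear_combination -hc)
  have h12v : (t-1).val ≠ (t-2).val := by
    intro hc
    apply h12
    rw [← natCast_zmod_val (t-1), ← natCast_zmod_val (t-2), hc]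
  -- the three indices
  cases b
  · -- x = (false, t) : in XT t, YT (t-1), YT (t-2)
    set i1 : Fin (v+7) := ⟨t.val, by omega⟩
    set i2 : Fin (v+7) := ⟨h + (t-1).val, by omega⟩
    set i3 : Fin (v+7) := ⟨h + (t-2).val, by omega⟩
    have m1 : (false, t) ∈ TF h v i1 := by
      unfold TF
      rw [if_pos (by show t.val < h; omega)]
      simp [XT, natCast_zmod_val, i1]
    have m2 : (false, t) ∈ TF h v i2 := by
      unfold TF
      rw [if_neg (by show ¬ (h + (t-1).val < h); omega)]
      have : (h + (t-1).val - h : ℕ) = (t-1).val := by omega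
      rw [this]
      simp only [YT, natCast_zmod_val, Finset.mem_insert, Finset.mem_singleton]
      right; left
      rw [sub_add_cancel]
    have m3 : (false, t) ∈ TF h v i3 := by
      unfold TF
      rw [if_neg (by show ¬ (h + (t-2).val < h); omega)]
      have : (h + (t-2).val - h : ℕ) = (t-2).val := by omega
      rw [this]
      simp only [YT, natCast_zmod_val, Finset.mem_insert, Finset.mem_singleton]
      right; right
      rw [show t - 2 + 2 = t by ring]
    have hsub : ({i1, i2, i3} : Finset (Fin (v+7))) ⊆ univ.filter (fun i => (false, t) ∈ TF h v i) := by
      intro i hi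
      simp only [Finset.mem_insert, Finset.mem_singleton] at hi
      rcases hi with rfl | rfl | rfl <;> simp [m1, m2, m3]
    have hcard : ({i1, i2, i3} : Finset (Fin (v+7))).card = 3 := by
      rw [Finset.card_insert_of_notMem, Finset.card_insert_of_notMem, Finset.card_singleton]
      · simp only [Finset.mem_singleton]
        intro hc
        have := congrArg Fin.val hc
        simp only [i2, i3] at this
        omega
      · simp only [Finset.mem_insert, Finset.mem_singleton]
        push_neg
        constructor <;> intro hc <;> have := congrArg Fin.val hc <;>
          simp only [i1, i2, i3] at this <;> omega
    calc 3 = ({i1, i2, i3} : Finset (Fin (v+7))).card := hcard.symm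
      _ ≤ _ := Finset.card_le_card hsub
  · -- x = (true, t) : in YT t, XT (t-1), XT (t-2)
    set i1 : Fin (v+7) := ⟨h + t.val, by omega⟩
    set i2 : Fin (v+7) := ⟨(t-1).val, by omega⟩
    set i3 : Fin (v+7) := ⟨(t-2).val, by omega⟩
    have m1 : (true, t) ∈ TF h v i1 := by
      unfold TF
      rw [if_neg (by show ¬ (h + t.val < h); omega)]
      have : (h + t.val - h : ℕ) = t.val := by omega
      rw [this]
      simp [YT, natCast_zmod_val]
    have m2 : (true, t) ∈ TF h v i2 := by
      unfold TF
      rw [if_pos (by show (t-1).val < h; omega)]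
      simp only [XT, i2, natCast_zmod_val, Finset.mem_insert, Finset.mem_singleton]
      right; left
      rw [sub_add_cancel]
    have m3 : (true, t) ∈ TF h v i3 := by
      unfold TF
      rw [if_pos (by show (t-2).val < h; omega)]
      simp only [XT, i3, natCast_zmod_val, Finset.mem_insert, Finset.mem_singleton]
      right; right
      rw [show t - 2 + 2 = t by ring]
    have hsub : ({i1, i2, i3} : Finset (Fin (v+7))) ⊆ univ.filter (fun i => (true, t) ∈ TF h v i) := by
      intro i hi
      simp only [Finset.mem_insert, Finset.mem_singleton] at hi
      rcases hi with rfl | rfl | rfl <;> simp [m1, m2, m3]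
    have hcard : ({i1, i2, i3} : Finset (Fin (v+7))).card = 3 := by
      rw [Finset.card_insert_of_notMem, Finset.card_insert_of_notMem, Finset.card_singleton]
      · simp only [Finset.mem_singleton]
        intro hc
        have := congrArg Fin.val hc
        simp only [i2, i3] at this
        omega
      · simp only [Finset.mem_insert, Finset.mem_singleton]
        push_neg
        constructor <;> intro hc <;> have := congrArg Fin.val hc <;>
          simp only [i1, i2, i3] at this <;> omega
    calc 3 = ({i1, i2, i3} : Finset (Fin (v+7))).card := hcard.symm
      _ ≤ _ := Finset.card_le_card hsub
end TriGeneric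

section Enum

/-- enumeration of a finset of naturals -/
def enumF (S : Finset ℕ) : ℕ → ℕ := fun j => (S.sort (·≤·)).getD j 0

lemma enumF_surj (S : Finset ℕ) (c : ℕ) (hc : c ∈ S) :
    ∃ j, j < S.card ∧ enumF S j = c := by
  have hmem : c ∈ S.sort (·≤·) := by rwa [Finset.mem_sort]
  obtain ⟨j, hj, hget⟩ := List.mem_iff_getElem.mp hmem
  refine ⟨j, ?_, ?_⟩
  · rwa [Finset.length_sort] at hj
  · rw [enumF, List.getD_eq_getElem _ _ hj, hget]

/-- the excluded ("bad") crossing classes in the odd case -/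
def BO (s : ℕ) : Finset ℕ := {0, 1, 2, s, s+1, 2*s-1, 2*s}
/-- the pure crossing classes in the odd case -/
def PO (s : ℕ) : Finset ℕ := (Finset.range (2*s+1)).filter (· ∉ BO s)

lemma PO_card {s : ℕ} (hs : 3 ≤ s) : (PO s).card = 2*s-6 := by
  have hBcard : (BO s).card = 7 := by
    rw [BO]
    rw [Finset.card_insert_of_notMem (by simp; omega),
        Finset.card_insert_of_notMem (by simp; omega),
        Finset.card_insert_of_notMem (by simp; omega),
        Finset.card_insert_of_notMem (by simp; omega),
        Finset.card_insert_of_notMem (by simp; omega),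
        Finset.card_insert_of_notMem (by simp; omega),
        Finset.card_singleton]
  have hsub : BO s ⊆ Finset.range (2*s+1) := by
    intro a ha
    simp only [BO, Finset.mem_insert, Finset.mem_singleton] at ha
    rw [Finset.mem_range]
    rcases ha with rfl|rfl|rfl|rfl|rfl|rfl|rfl <;> omega
  have h1 : (Finset.range (2*s+1)).filter (· ∈ BO s) = BO s := by
    rw [Finset.filter_mem_eq_inter, Finset.inter_eq_right.mpr hsub]
  have h2 := Finset.card_filter_add_card_filter_not
    (s := Finset.range (2*s+1)) (p := (· ∈ BO s))
  rw [h1, hBcard, Finset.card_range] at h2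
  have : PO s = (Finset.range (2*s+1)).filter (fun a => ¬ a ∈ BO s) := rfl
  rw [this]
  omega

lemma mem_PO {s : ℕ} (c : ℕ) (hlt : c < 2*s+1)
    (h0 : c ≠ 0) (h1 : c ≠ 1) (h2 : c ≠ 2) (h3 : c ≠ s) (h4 : c ≠ s+1)
    (h5 : c ≠ 2*s-1) (h6 : c ≠ 2*s) : c ∈ PO s := by
  rw [PO, Finset.mem_filter, Finset.mem_range]
  refine ⟨hlt, ?_⟩
  simp only [BO, Finset.mem_insert, Finset.mem_singleton]
  push_neg
  exact ⟨h0, h1, h2, h3, h4, h5, h6⟩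

end Enum

lemma mem3_1 {α : Type} [DecidableEq α] (a b c : α) : a ∈ ({a,b,c} : Finset α) := by simp
lemma mem3_2 {α : Type} [DecidableEq α] (a b c : α) : b ∈ ({a,b,c} : Finset α) := by simp
lemma mem3_3 {α : Type} [DecidableEq α] (a b c : α) : c ∈ ({a,b,c} : Finset α) := by simp

/-- the odd-case matchings -/
def MO (s v : ℕ) : Fin v → (Bool × ZMod (2*s+1)) → (Bool × ZMod (2*s+1)) := fun k x =>
  if k.val < 2*s+1 then rhoF (pOdd s) ((k.val : ℕ) : ZMod (2*s+1)) x
  else muF ((enumF (PO s) (k.val - (2*s+1)) : ℕ) : ZMod (2*s+1)) x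

section CoverOdd
variable {s v : ℕ}

lemma rhoF_eval {h : ℕ} (p : Bool × ZMod h → Bool × ZMod h) (j : ZMod h) (b : Bool) (t : ZMod h) :
    rhoF p j (b, t) = ((p (b, t - j)).1, (p (b, t - j)).2 + j) := rfl

lemma muF_eval_f {h : ℕ} (c : ZMod h) (t : ZMod h) : muF c (false, t) = (true, t + c) := rfl

lemma TF_lo {h v : ℕ} [NeZero h] (a : ℕ) (ha : a < h) (hb : a < v + 7) :
    TF h v ⟨a, hb⟩ = XT h ((a : ℕ) : ZMod h) := by
  simp only [TF]
  rw [if_pos ha]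

lemma TF_hi {h v : ℕ} [NeZero h] (a : ℕ) (ha : ¬ (h + a < h)) (hb : h + a < v + 7) :
    TF h v ⟨h + a, hb⟩ = YT h ((a : ℕ) : ZMod h) := by
  simp only [TF]
  rw [if_neg ha, (show (h + a - h : ℕ) = a by omega)]

lemma MO_lo (a : ℕ) (ha : a < 2*s+1) (hb : a < v) (x : Bool × ZMod (2*s+1)) :
    MO s v ⟨a, hb⟩ x = rhoF (pOdd s) ((a : ℕ) : ZMod (2*s+1)) x := by
  simp only [MO]
  rw [if_pos ha]

lemma MO_hi (a : ℕ) (ha : ¬ (2*s+1 + a < 2*s+1)) (hb : 2*s+1 + a < v) (x : Bool × ZMod (2*s+1)) :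
    MO s v ⟨2*s+1 + a, hb⟩ x
      = muF ((enumF (PO s) a : ℕ) : ZMod (2*s+1)) x := by
  simp only [MO]
  rw [if_neg ha, (show (2*s+1 + a - (2*s+1) : ℕ) = a by omega)]

lemma cover_cross_odd (hs : 3 ≤ s) (hv : v + 7 = 2*(2*s+1)) (t1 t2 : ZMod (2*s+1)) :
    (∃ i, (false,t1) ∈ TF (2*s+1) v i ∧ (true,t2) ∈ TF (2*s+1) v i) ∨
    (∃ k : Fin v, MO s v k (false,t1) = (true,t2)) := by
  haveI : NeZero (2*s+1) := ⟨by omega⟩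
  have hz : ((2*s+1 : ℕ) : ZMod (2*s+1)) = 0 := ZMod.natCast_self _
  have hvlt1 := t1.val_lt
  have hvlt2 := t2.val_lt
  by_cases hc1 : t2 - t1 = 1
  · left
    refine ⟨⟨t1.val, by omega⟩, ?_, ?_⟩ <;>
      rw [TF_lo t1.val (by omega) (by omega), natCast_zmod_val, XT]
    · exact mem3_1 _ _ _
    · rw [show t2 = t1 + 1 by linear_combination hc1]
      exact mem3_2 _ _ _
  by_cases hc2 : t2 - t1 = 2
  · left
    refine ⟨⟨t1.val, by omega⟩, ?_, ?_⟩ <;>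
      rw [TF_lo t1.val (by omega) (by omega), natCast_zmod_val, XT]
    · exact mem3_1 _ _ _
    · rw [show t2 = t1 + 2 by linear_combination hc2]
      exact mem3_3 _ _ _
  by_cases hcm1 : t2 - t1 = -1
  · left
    refine ⟨⟨2*s+1 + t2.val, by omega⟩, ?_, ?_⟩ <;>
      rw [TF_hi t2.val (by omega) (by omega), natCast_zmod_val, YT]
    · rw [show t1 = t2 + 1 by linear_combination -hcm1]
      exact mem3_2 _ _ _
    · exact mem3_1 _ _ _
  by_cases hcm2 : t2 - t1 = -2
  · left
    refine ⟨⟨2*s+1 + t2.val, by omega⟩, ?_, ?_⟩ <;>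
      rw [TF_hi t2.val (by omega) (by omega), natCast_zmod_val, YT]
    · rw [show t1 = t2 + 2 by linear_combination -hcm2]
      exact mem3_3 _ _ _
    · exact mem3_1 _ _ _
  right
  by_cases hcs : t2 - t1 = (s : ZMod (2*s+1))
  · refine ⟨⟨t1.val, by omega⟩, ?_⟩
    rw [MO_lo t1.val (by omega) (by omega), natCast_zmod_val, rhoF_eval, sub_self,
      pOdd_at0 hs]
    rw [Prod.mk.injEq]
    exact ⟨rfl, by linear_combination -hcs⟩
  by_cases hcs1 : t2 - t1 = ((s+1 : ℕ) : ZMod (2*s+1))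
  · refine ⟨⟨(t1 - (s : ZMod (2*s+1))).val, by have := (t1 - (s : ZMod (2*s+1))).val_lt; omega⟩, ?_⟩
    rw [MO_lo _ (by have := (t1 - (s : ZMod (2*s+1))).val_lt; omega)
        (by have := (t1 - (s : ZMod (2*s+1))).val_lt; omega), natCast_zmod_val, rhoF_eval,
      (show t1 - (t1 - (s : ZMod (2*s+1))) = (s : ZMod (2*s+1)) by ring), pOdd_atS hs]
    rw [Prod.mk.injEq]
    refine ⟨rfl, ?_⟩
    push_cast at hcs1 hz ⊢
    linear_combination -hcs1 - hz
  by_cases hc0 : t2 - t1 = 0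
  · refine ⟨⟨(t1 - ((s+1:ℕ) : ZMod (2*s+1))).val,
      by have := (t1 - ((s+1:ℕ) : ZMod (2*s+1))).val_lt; omega⟩, ?_⟩
    rw [MO_lo _ (by have := (t1 - ((s+1:ℕ) : ZMod (2*s+1))).val_lt; omega)
        (by have := (t1 - ((s+1:ℕ) : ZMod (2*s+1))).val_lt; omega), natCast_zmod_val, rhoF_eval,
      (show t1 - (t1 - ((s+1:ℕ) : ZMod (2*s+1))) = ((s+1:ℕ) : ZMod (2*s+1)) by ring),
      pOdd_atS1 hs]
    rw [Prod.mk.injEq]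
    exact ⟨rfl, by linear_combination -hc0⟩
  -- pure crossing class
  set c := t2 - t1 with hcdef
  have hval : c.val ∈ PO s := by
    apply mem_PO c.val (by have := c.val_lt; omega)
    · intro hc; exact hc0 (by rwa [ZMod.val_eq_zero] at hc)
    · intro hc
      apply hc1
      have := (val_eq_cast_iff c 1 (by omega)).mp hc
      simpa using this
    · intro hc
      apply hc2
      have := (val_eq_cast_iff c 2 (by omega)).mp hc
      simpa using this
    · intro hc; exact hcs ((val_eq_cast_iff c s (by omega)).mp hc)
    · intro hc; exact hcs1 ((val_eq_cast_iff c (s+1) (by omega)).mp hc)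
    · intro hc
      apply hcm2
      rw [(val_eq_cast_iff c (2*s-1) (by omega)).mp hc]
      push_cast [(show (1:ℕ) ≤ 2*s by omega)] at hz ⊢
      linear_combination hz
    · intro hc
      apply hcm1
      rw [(val_eq_cast_iff c (2*s) (by omega)).mp hc]
      push_cast at hz ⊢
      linear_combination hz
  obtain ⟨j0, hj0, hget⟩ := enumF_surj (PO s) c.val hval
  rw [PO_card hs] at hj0
  refine ⟨⟨2*s+1 + j0, by omega⟩, ?_⟩
  rw [MO_hi j0 (by omega) (by omega), hget, natCast_zmod_val, muF_eval_f]
  rw [Prod.mk.injEq]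
  exact ⟨rfl, by linear_combination hcdef⟩

lemma cover_same_odd (hs : 3 ≤ s) (hv : v + 7 = 2*(2*s+1)) (b : Bool) (t1 t2 : ZMod (2*s+1))
    (hne : t1 ≠ t2) :
    (∃ i, (b,t1) ∈ TF (2*s+1) v i ∧ (b,t2) ∈ TF (2*s+1) v i) ∨
    (∃ k : Fin v, MO s v k (b,t1) = (b,t2)) := by
  haveI : NeZero (2*s+1) := ⟨by omega⟩
  have hz : ((2*s+1 : ℕ) : ZMod (2*s+1)) = 0 := ZMod.natCast_self _
  have h2inv : (2 : ZMod (2*s+1)) * ((s+1 : ℕ) : ZMod (2*s+1)) = 1 := by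
    push_cast at hz ⊢
    linear_combination hz
  have hd0 : t2 - t1 ≠ 0 := sub_ne_zero.mpr (Ne.symm hne)
  by_cases hd1 : t2 - t1 = 1
  · left
    cases b
    · refine ⟨⟨2*s+1 + (t1-1).val, by have := (t1-1).val_lt; omega⟩, ?_, ?_⟩ <;>
        rw [TF_hi (t1-1).val (by have := (t1-1).val_lt; omega)
          (by have := (t1-1).val_lt; omega), natCast_zmod_val, YT]
      · rw [show (false, t1) = ((false : Bool), t1 - 1 + 1) from by rw [Prod.mk.injEq]; exact ⟨rfl, by ring⟩]
        exact mem3_2 _ _ _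
      · rw [show (false, t2) = ((false : Bool), t1 - 1 + 2) from by rw [Prod.mk.injEq]; exact ⟨rfl, by linear_combination hd1⟩]
        exact mem3_3 _ _ _
    · refine ⟨⟨(t1-1).val, by have := (t1-1).val_lt; omega⟩, ?_, ?_⟩ <;>
        rw [TF_lo (t1-1).val (by have := (t1-1).val_lt; omega)
          (by have := (t1-1).val_lt; omega), natCast_zmod_val, XT]
      · rw [show (true, t1) = ((true : Bool), t1 - 1 + 1) from by rw [Prod.mk.injEq]; exact ⟨rfl, by ring⟩]
        exact mem3_2 _ _ _
      · rw [show (true, t2) = ((true : Bool), t1 - 1 + 2) from by rw [Prod.mk.injEq]; exact ⟨rfl, by linear_combination hd1⟩]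
        exact mem3_3 _ _ _
  by_cases hdm1 : t2 - t1 = -1
  · left
    cases b
    · refine ⟨⟨2*s+1 + (t2-1).val, by have := (t2-1).val_lt; omega⟩, ?_, ?_⟩ <;>
        rw [TF_hi (t2-1).val (by have := (t2-1).val_lt; omega)
          (by have := (t2-1).val_lt; omega), natCast_zmod_val, YT]
      · rw [show (false, t1) = ((false : Bool), t2 - 1 + 2) from by rw [Prod.mk.injEq]; exact ⟨rfl, by linear_combination -hdm1⟩]
        exact mem3_3 _ _ _
      · rw [show (false, t2) = ((false : Bool), t2 - 1 + 1) from by rw [Prod.mk.injEq]; exact ⟨rfl, by ring⟩]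
        exact mem3_2 _ _ _
    · refine ⟨⟨(t2-1).val, by have := (t2-1).val_lt; omega⟩, ?_, ?_⟩ <;>
        rw [TF_lo (t2-1).val (by have := (t2-1).val_lt; omega)
          (by have := (t2-1).val_lt; omega), natCast_zmod_val, XT]
      · rw [show (true, t1) = ((true : Bool), t2 - 1 + 2) from by rw [Prod.mk.injEq]; exact ⟨rfl, by linear_combination -hdm1⟩]
        exact mem3_3 _ _ _
      · rw [show (true, t2) = ((true : Bool), t2 - 1 + 1) from by rw [Prod.mk.injEq]; exact ⟨rfl, by ring⟩]
        exact mem3_2 _ _ _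
  -- rotation
  right
  set u : ZMod (2*s+1) := -(((s+1 : ℕ) : ZMod (2*s+1)) * (t2 - t1)) with hu
  have hdu : -(2*u) = t2 - t1 := by
    rw [hu]
    linear_combination (t2 - t1) * h2inv
  set j : ZMod (2*s+1) := t1 + ((s+1 : ℕ) : ZMod (2*s+1)) * (t2 - t1) with hj
  have hu0 : u.val ≠ 0 := by
    intro hc
    have hueq : u = 0 := by rwa [ZMod.val_eq_zero] at hc
    rw [hueq] at hdu
    simp at hdu
    exact hd0 hdu.symm
  have hus : u.val ≠ s := by
    intro hc
    have hus' : u = (s : ZMod (2*s+1)) := (val_eq_cast_iff u s (by omega)).mp hc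
    apply hd1
    rw [← hdu, hus']
    push_cast at hz ⊢
    linear_combination -hz
  have hus1 : u.val ≠ s+1 := by
    intro hc
    have hus' : u = ((s+1:ℕ) : ZMod (2*s+1)) := (val_eq_cast_iff u (s+1) (by omega)).mp hc
    apply hdm1
    rw [← hdu, hus']
    push_cast at hz ⊢
    linear_combination -hz
  refine ⟨⟨j.val, by have := j.val_lt; omega⟩, ?_⟩
  rw [MO_lo j.val (by have := j.val_lt; omega) (by have := j.val_lt; omega), natCast_zmod_val,
    rhoF_eval, (show t1 - j = u by rw [hj, hu]; ring), pOdd_gen b u hu0 hus hus1]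
  rw [Prod.mk.injEq]
  refine ⟨rfl, ?_⟩
  rw [hu, hj]
  linear_combination (t2 - t1) * h2inv
end CoverOdd

-- caseOdd assembly (to be concatenated after all previous pieces)
lemma caseOdd (s v : ℕ) (hs : 3 ≤ s) (hv : v + 7 = 2*(2*s+1)) :
    ∃ (T : Fin (v + 7) → Finset (Fin (v + 7)))
      (M : Fin v → Fin (v + 7) → Fin (v + 7)),
      (∀ i, (T i).card = 3) ∧
      (∀ k x, M k x ≠ x) ∧
      (∀ k x, M k (M k x) = x) ∧
      (∀ x y : Fin (v + 7), x ≠ y →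
        (Finset.univ.filter (fun i => x ∈ T i ∧ y ∈ T i)).card +
        (Finset.univ.filter (fun k : Fin v => M k x = y)).card = 1) ∧
      (∀ x, (Finset.univ.filter (fun i => x ∈ T i)).card = 3) := by
  haveI : NeZero (2*s+1) := ⟨by omega⟩
  have hcardV : Fintype.card (Bool × ZMod (2*s+1)) = v + 7 := by
    simp [ZMod.card]
    omega
  set e2 : (Bool × ZMod (2*s+1)) ≃ Fin (v+7) := Fintype.equivFinOfCardEq hcardV with he2
  set T' := TF (2*s+1) v with hT'
  set M' := MO s v with hM'
  have hT3' : ∀ i, (T' i).card = 3 := fun i => TF_card (by omega) i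
  have hM1' : ∀ k x, M' k x ≠ x := by
    intro k x
    rw [hM', MO]
    split
    · exact rhoF_ne _ (pOdd_ne hs) _ _
    · exact muF_ne _ _
  have hM2' : ∀ k x, M' k (M' k x) = x := by
    intro k x
    rw [hM']
    by_cases hk : (k : ℕ) < 2*s+1
    · simp only [MO, if_pos hk]
      exact rhoF_invol _ (pOdd_invol hs) _ _
    · simp only [MO, if_neg hk]
      exact muF_invol _ _
  have hcov' : ∀ x y : Bool × ZMod (2*s+1), x ≠ y →
      (∃ i, x ∈ T' i ∧ y ∈ T' i) ∨ ∃ k, M' k x = y := by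
    rintro ⟨b1, t1⟩ ⟨b2, t2⟩ hne
    match b1, b2 with
    | false, false =>
        exact cover_same_odd hs hv false t1 t2 (fun h => hne (by rw [h]))
    | true, true =>
        exact cover_same_odd hs hv true t1 t2 (fun h => hne (by rw [h]))
    | false, true => exact cover_cross_odd hs hv t1 t2
    | true, false =>
        rcases cover_cross_odd hs hv t2 t1 with ⟨i, h1, h2⟩ | ⟨k, hk⟩
        · exact Or.inl ⟨i, h2, h1⟩
        · exact Or.inr ⟨k, by rw [← hk, hM2']⟩
  have hv3' : ∀ x : Bool × ZMod (2*s+1),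
      3 ≤ (Finset.univ.filter (fun i => x ∈ T' i)).card := fun x => TF_deg (by omega) hv x
  -- transport along the equivalence
  set T : Fin (v+7) → Finset (Fin (v+7)) := fun i => (T' i).map e2.toEmbedding with hT
  set M : Fin v → Fin (v+7) → Fin (v+7) := fun k x => e2 (M' k (e2.symm x)) with hM
  have hmemT : ∀ (x : Fin (v+7)) (i : Fin (v+7)), x ∈ T i ↔ e2.symm x ∈ T' i := by
    intro x i
    rw [hT]
    exact Finset.mem_map_equiv
  have hT3 : ∀ i, (T i).card = 3 := by
    intro i; rw [hT]; simpa using hT3' i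
  have hM1 : ∀ k x, M k x ≠ x := by
    intro k x h
    rw [hM] at h
    exact hM1' k (e2.symm x) (by simpa using congrArg e2.symm h)
  have hM2 : ∀ k x, M k (M k x) = x := by
    intro k x
    rw [hM]
    simp only [Equiv.symm_apply_apply, hM2', Equiv.apply_symm_apply]
  have hcov : ∀ x y : Fin (v+7), x ≠ y →
      (∃ i, x ∈ T i ∧ y ∈ T i) ∨ ∃ k, M k x = y := by
    intro x y hxy
    have hne' : e2.symm x ≠ e2.symm y := fun hc => hxy (e2.symm.injective hc)
    rcases hcov' (e2.symm x) (e2.symm y) hne' with ⟨i, h1, h2⟩ | ⟨k, hk⟩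
    · exact Or.inl ⟨i, (hmemT x i).mpr h1, (hmemT y i).mpr h2⟩
    · refine Or.inr ⟨k, ?_⟩
      rw [hM]
      simp only [hk, Equiv.apply_symm_apply]
  have hv3 : ∀ x : Fin (v+7), 3 ≤ (Finset.univ.filter (fun i => x ∈ T i)).card := by
    intro x
    have : (Finset.univ.filter (fun i => x ∈ T i))
        = (Finset.univ.filter (fun i => e2.symm x ∈ T' i)) := by
      apply Finset.filter_congr
      intro i _
      simp only [hmemT]
    rw [this]
    exact hv3' (e2.symm x)
  have main := main_abstract v (by simp) T M hT3 hM1 hM2 hcov hv3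
  exact ⟨T, M, hT3, hM1, hM2, main.1, main.2⟩

section PEvenDef

/-- starter matching for `h = 2s` even, `s ≥ 6`; `(s+1)/2` plays the role of γ -/
def pEven (s : ℕ) (x : Bool × ZMod (2*s)) : Bool × ZMod (2*s) :=
  if x.2.val = 0 then
    (if x.1 then ((false, (((s+1:ℕ)) : ZMod (2*s)))) else (true, ((s:ℕ) : ZMod (2*s))))
  else if x.2.val = (s+1)/2 then
    (if x.1 then (false, ((s:ℕ) : ZMod (2*s))) else (true, ((s+1:ℕ) : ZMod (2*s))))
  else if x.2.val = s then
    (if x.1 then (false, 0) else (true, (((s+1)/2 : ℕ) : ZMod (2*s))))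
  else if x.2.val = s+1 then
    (if x.1 then (false, (((s+1)/2 : ℕ) : ZMod (2*s))) else (true, 0))
  else if x.2.val < (s+1)/2 ∨ 2*s - (s+1)/2 < x.2.val then (x.1, -x.2)
  else (x.1, 1 - x.2)

variable {s : ℕ}

lemma val0E (hs : 6 ≤ s) : ((0 : ZMod (2*s))).val = 0 := by
  haveI : NeZero (2*s) := ⟨by omega⟩
  exact ZMod.val_zero

lemma valsE (hs : 6 ≤ s) : (((s:ℕ) : ZMod (2*s))).val = s := by
  haveI : NeZero (2*s) := ⟨by omega⟩
  exact ZMod.val_cast_of_lt (by omega)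

lemma vals1E (hs : 6 ≤ s) : (((s+1:ℕ) : ZMod (2*s))).val = s+1 := by
  haveI : NeZero (2*s) := ⟨by omega⟩
  exact ZMod.val_cast_of_lt (by omega)

lemma valgE (hs : 6 ≤ s) : ((((s+1)/2:ℕ) : ZMod (2*s))).val = (s+1)/2 := by
  haveI : NeZero (2*s) := ⟨by omega⟩
  exact ZMod.val_cast_of_lt (by omega)

lemma pEven_f0 (hs : 6 ≤ s) : pEven s (false, 0) = (true, ((s:ℕ) : ZMod (2*s))) := by
  simp only [pEven, val0E hs]
  norm_num

lemma pEven_t0 (hs : 6 ≤ s) : pEven s (true, 0) = (false, ((s+1:ℕ) : ZMod (2*s))) := by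
  simp only [pEven, val0E hs]
  norm_num

lemma pEven_fg (hs : 6 ≤ s) :
    pEven s (false, (((s+1)/2:ℕ) : ZMod (2*s))) = (true, ((s+1:ℕ) : ZMod (2*s))) := by
  simp only [pEven, valgE hs]
  rw [if_neg (by omega)]
  simp

lemma pEven_tg (hs : 6 ≤ s) :
    pEven s (true, (((s+1)/2:ℕ) : ZMod (2*s))) = (false, ((s:ℕ) : ZMod (2*s))) := by
  simp only [pEven, valgE hs]
  rw [if_neg (by omega)]
  simp

lemma pEven_fs (hs : 6 ≤ s) :
    pEven s (false, ((s:ℕ) : ZMod (2*s))) = (true, (((s+1)/2:ℕ) : ZMod (2*s))) := by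
  simp only [pEven, valsE hs]
  rw [if_neg (by omega), if_neg (by omega)]
  simp

lemma pEven_ts (hs : 6 ≤ s) :
    pEven s (true, ((s:ℕ) : ZMod (2*s))) = (false, 0) := by
  simp only [pEven, valsE hs]
  rw [if_neg (by omega), if_neg (by omega)]
  simp

lemma pEven_fs1 (hs : 6 ≤ s) :
    pEven s (false, ((s+1:ℕ) : ZMod (2*s))) = (true, 0) := by
  simp only [pEven, vals1E hs]
  rw [if_neg (by omega), if_neg (by omega), if_neg (by omega)]
  simp

lemma pEven_ts1 (hs : 6 ≤ s) :
    pEven s (true, ((s+1:ℕ) : ZMod (2*s))) = (false, (((s+1)/2:ℕ) : ZMod (2*s))) := by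
  simp only [pEven, vals1E hs]
  rw [if_neg (by omega), if_neg (by omega), if_neg (by omega)]
  simp

lemma pEven_neg (hs : 6 ≤ s) (b : Bool) (t : ZMod (2*s))
    (h0 : t.val ≠ 0) (hr : t.val < (s+1)/2 ∨ 2*s - (s+1)/2 < t.val) :
    pEven s (b, t) = (b, -t) := by
  haveI : NeZero (2*s) := ⟨by omega⟩
  have hlt := t.val_lt
  simp only [pEven]
  rw [if_neg h0, if_neg (by omega), if_neg (by omega), if_neg (by omega), if_pos hr]

lemma pEven_sub (hs : 6 ≤ s) (b : Bool) (t : ZMod (2*s))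
    (hg : (s+1)/2 < t.val) (hg2 : t.val ≤ 2*s - (s+1)/2)
    (hns : t.val ≠ s) (hns1 : t.val ≠ s+1) :
    pEven s (b, t) = (b, 1 - t) := by
  haveI : NeZero (2*s) := ⟨by omega⟩
  simp only [pEven]
  rw [if_neg (by omega), if_neg (by omega), if_neg hns, if_neg hns1, if_neg (by omega)]

lemma neg_cast_val {h : ℕ} [NeZero h] (w : ℕ) (h1 : 1 ≤ w) (h2 : w < h) :
    ((-((w:ℕ) : ZMod h)).val) = h - w := by
  have hz : ((h : ℕ) : ZMod h) = 0 := ZMod.natCast_self _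
  have : -((w:ℕ) : ZMod h) = ((h - w : ℕ) : ZMod h) := by
    push_cast [Nat.cast_sub h2.le]
    linear_combination -hz
  rw [this, ZMod.val_cast_of_lt (by omega)]

lemma one_sub_cast_val {h : ℕ} [NeZero h] (a : ℕ) (h1 : 2 ≤ a) (h2 : a < h) :
    ((1 - ((a:ℕ) : ZMod h)).val) = h + 1 - a := by
  have hz : ((h : ℕ) : ZMod h) = 0 := ZMod.natCast_self _
  have : (1 : ZMod h) - ((a:ℕ) : ZMod h) = ((h + 1 - a : ℕ) : ZMod h) := by
    push_cast [Nat.cast_sub (by omega : a ≤ h + 1)]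
    linear_combination -hz
  rw [this, ZMod.val_cast_of_lt (by omega)]

lemma pEven_invol (hs : 6 ≤ s) (x : Bool × ZMod (2*s)) : pEven s (pEven s x) = x := by
  haveI : NeZero (2*s) := ⟨by omega⟩
  obtain ⟨b, t⟩ := x
  have hlt := t.val_lt
  by_cases h0 : t.val = 0
  · have ht : t = 0 := by rwa [ZMod.val_eq_zero] at h0
    subst ht
    cases b
    · rw [pEven_f0 hs, pEven_ts hs]
    · rw [pEven_t0 hs, pEven_fs1 hs]
  · by_cases hg : t.val = (s+1)/2
    · have ht : t = (((s+1)/2 : ℕ) : ZMod (2*s)) := by rw [← natCast_zmod_val t, hg]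
      subst ht
      cases b
      · rw [pEven_fg hs, pEven_ts1 hs]
      · rw [pEven_tg hs, pEven_fs hs]
    · by_cases hsv : t.val = s
      · have ht : t = ((s : ℕ) : ZMod (2*s)) := by rw [← natCast_zmod_val t, hsv]
        subst ht
        cases b
        · rw [pEven_fs hs, pEven_tg hs]
        · rw [pEven_ts hs, pEven_f0 hs]
      · by_cases hs1 : t.val = s+1
        · have ht : t = ((s+1 : ℕ) : ZMod (2*s)) := by rw [← natCast_zmod_val t, hs1]
          subst ht
          cases b
          · rw [pEven_fs1 hs, pEven_t0 hs]
          · rw [pEven_ts1 hs, pEven_fg hs]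
        · by_cases hrange : t.val < (s+1)/2 ∨ 2*s - (s+1)/2 < t.val
          · rw [pEven_neg hs b t h0 hrange]
            have hnv : (-t).val = 2*s - t.val := by
              rw [← natCast_zmod_val t, neg_cast_val t.val (by omega) (by omega)]
              rw [ZMod.val_cast_of_lt (by omega)]
            rw [pEven_neg hs b (-t) (by omega) (by omega), neg_neg]
          · push_neg at hrange
            rw [pEven_sub hs b t (by omega) (by omega) hsv hs1]
            have hnv : (1-t).val = 2*s + 1 - t.val := by
              rw [← natCast_zmod_val t, one_sub_cast_val t.val (by omega) (by omega)]
              rw [ZMod.val_cast_of_lt (by omega)]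
            rw [pEven_sub hs b (1-t) (by omega) (by omega) (by omega) (by omega)]
            congr 1
            ring
  
lemma pEven_ne (hs : 6 ≤ s) (x : Bool × ZMod (2*s)) : pEven s x ≠ x := by
  haveI : NeZero (2*s) := ⟨by omega⟩
  obtain ⟨b, t⟩ := x
  have hlt := t.val_lt
  by_cases h0 : t.val = 0
  · have ht : t = 0 := by rwa [ZMod.val_eq_zero] at h0
    subst ht
    cases b
    · rw [pEven_f0 hs]; simp
    · rw [pEven_t0 hs]; simp
  · by_cases hg : t.val = (s+1)/2
    · have ht : t = (((s+1)/2 : ℕ) : ZMod (2*s)) := by rw [← natCast_zmod_val t, hg]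
      subst ht
      cases b
      · rw [pEven_fg hs]; simp
      · rw [pEven_tg hs]; simp
    · by_cases hsv : t.val = s
      · have ht : t = ((s : ℕ) : ZMod (2*s)) := by rw [← natCast_zmod_val t, hsv]
        subst ht
        cases b
        · rw [pEven_fs hs]; simp
        · rw [pEven_ts hs]; simp
      · by_cases hs1 : t.val = s+1
        · have ht : t = ((s+1 : ℕ) : ZMod (2*s)) := by rw [← natCast_zmod_val t, hs1]
          subst ht
          cases b
          · rw [pEven_fs1 hs]; simp
          · rw [pEven_ts1 hs]; simp
        · by_cases hrange : t.val < (s+1)/2 ∨ 2*s - (s+1)/2 < t.val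
          · rw [pEven_neg hs b t h0 hrange]
            intro hcon
            have hteq : -t = t := (Prod.ext_iff.mp hcon).2
            have hnv : (-t).val = 2*s - t.val := by
              rw [← natCast_zmod_val t, neg_cast_val t.val (by omega) (by omega)]
              rw [ZMod.val_cast_of_lt (by omega)]
            have := congrArg ZMod.val hteq
            rw [hnv] at this
            omega
          · push_neg at hrange
            rw [pEven_sub hs b t (by omega) (by omega) hsv hs1]
            intro hcon
            have hteq : 1 - t = t := (Prod.ext_iff.mp hcon).2
            have hnv : (1-t).val = 2*s + 1 - t.val := by
              rw [← natCast_zmod_val t, one_sub_cast_val t.val (by omega) (by omega)]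
              rw [ZMod.val_cast_of_lt (by omega)]
            have := congrArg ZMod.val hteq
            rw [hnv] at this
            omega

end PEvenDef

-- EVEN CASE: enumeration, matchings, covers (concatenated after previous pieces)
section EvenCase

/-- excluded crossing classes, even case -/
def BE (s : ℕ) : Finset ℕ := {1, 2, s-1, s, s + (s+1)/2, s+1-(s+1)/2, 2*s-2, 2*s-1}
/-- pure crossing classes, even case -/
def PE (s : ℕ) : Finset ℕ := (Finset.range (2*s)).filter (· ∉ BE s)

lemma PE_card {s : ℕ} (hs : 6 ≤ s) : (PE s).card = 2*s-8 := by
  have hBcard : (BE s).card = 8 := by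
    rw [BE]
    rw [Finset.card_insert_of_notMem (by simp; omega),
        Finset.card_insert_of_notMem (by simp; omega),
        Finset.card_insert_of_notMem (by simp; omega),
        Finset.card_insert_of_notMem (by simp; omega),
        Finset.card_insert_of_notMem (by simp; omega),
        Finset.card_insert_of_notMem (by simp; omega),
        Finset.card_insert_of_notMem (by simp; omega),
        Finset.card_singleton]
  have hsub : BE s ⊆ Finset.range (2*s) := by
    intro a ha
    simp only [BE, Finset.mem_insert, Finset.mem_singleton] at ha
    rw [Finset.mem_range]
    rcases ha with rfl|rfl|rfl|rfl|rfl|rfl|rfl|rfl <;> omega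
  have h1 : (Finset.range (2*s)).filter (· ∈ BE s) = BE s := by
    rw [Finset.filter_mem_eq_inter, Finset.inter_eq_right.mpr hsub]
  have h2 := Finset.card_filter_add_card_filter_not
    (s := Finset.range (2*s)) (p := (· ∈ BE s))
  rw [h1, hBcard, Finset.card_range] at h2
  have : PE s = (Finset.range (2*s)).filter (fun a => ¬ a ∈ BE s) := rfl
  rw [this]
  omega

lemma mem_PE {s : ℕ} (c : ℕ) (hlt : c < 2*s)
    (h1 : c ≠ 1) (h2 : c ≠ 2) (h3 : c ≠ s-1) (h4 : c ≠ s)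
    (h5 : c ≠ s + (s+1)/2) (h6 : c ≠ s+1-(s+1)/2) (h7 : c ≠ 2*s-2) (h8 : c ≠ 2*s-1) :
    c ∈ PE s := by
  rw [PE, Finset.mem_filter, Finset.mem_range]
  refine ⟨hlt, ?_⟩
  simp only [BE, Finset.mem_insert, Finset.mem_singleton]
  push_neg
  exact ⟨h1, h2, h3, h4, h5, h6, h7, h8⟩

/-- the even-case matchings -/
def MEV (s v : ℕ) : Fin v → (Bool × ZMod (2*s)) → (Bool × ZMod (2*s)) := fun k x =>
  if k.val < 2*s then rhoF (pEven s) ((k.val : ℕ) : ZMod (2*s)) x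
  else if k.val = 2*s then (x.1, x.2 + ((s:ℕ) : ZMod (2*s)))
  else muF ((enumF (PE s) (k.val - (2*s) - 1) : ℕ) : ZMod (2*s)) x

variable {s v : ℕ}

lemma MEV_lo (a : ℕ) (ha : a < 2*s) (hb : a < v) (x : Bool × ZMod (2*s)) :
    MEV s v ⟨a, hb⟩ x = rhoF (pEven s) ((a : ℕ) : ZMod (2*s)) x := by
  simp only [MEV]
  rw [if_pos ha]

lemma MEV_half (hb : 2*s < v) (x : Bool × ZMod (2*s)) :
    MEV s v ⟨2*s, hb⟩ x = (x.1, x.2 + ((s:ℕ) : ZMod (2*s))) := by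
  simp only [MEV]
  rw [if_neg (by omega)]
  simp

lemma MEV_hi (a : ℕ) (hb : 2*s+1+a < v) (x : Bool × ZMod (2*s)) :
    MEV s v ⟨2*s+1+a, hb⟩ x = muF ((enumF (PE s) a : ℕ) : ZMod (2*s)) x := by
  simp only [MEV]
  rw [if_neg (by omega), if_neg (by omega), (show (2*s+1+a) - (2*s) - 1 = a by omega)]

lemma MEV_ne (hs : 6 ≤ s) (k : Fin v) (x : Bool × ZMod (2*s)) : MEV s v k x ≠ x := by
  haveI : NeZero (2*s) := ⟨by omega⟩
  rw [MEV]
  split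
  · exact rhoF_ne _ (pEven_ne hs) _ _
  split
  · intro hcon
    have := (Prod.ext_iff.mp hcon).2
    have hz : ((s:ℕ) : ZMod (2*s)) = 0 := by
      have h1 := congrArg (· - x.2) this
      simpa using h1
    have := congrArg ZMod.val hz
    rw [valsE hs, ZMod.val_zero] at this
    omega
  · exact muF_ne _ _

lemma MEV_invol (hs : 6 ≤ s) (k : Fin v) (x : Bool × ZMod (2*s)) :
    MEV s v k (MEV s v k x) = x := by
  haveI : NeZero (2*s) := ⟨by omega⟩
  by_cases h1 : k.val < 2*s
  · simp only [MEV, if_pos h1]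
    exact rhoF_invol _ (pEven_invol hs) _ _
  by_cases h2 : k.val = 2*s
  · simp only [MEV, if_neg h1, if_pos h2]
    have : (2*s : ℕ) = s + s := by omega
    rw [Prod.mk.injEq]
    refine ⟨rfl, ?_⟩
    have hz : ((2*s : ℕ) : ZMod (2*s)) = 0 := ZMod.natCast_self _
    push_cast at hz ⊢
    linear_combination hz
  · simp only [MEV, if_neg h1, if_neg h2]
    exact muF_invol _ _

lemma cover_cross_even (hs : 6 ≤ s) (hv : v + 7 = 2*(2*s)) (t1 t2 : ZMod (2*s)) :
    (∃ i, (false,t1) ∈ TF (2*s) v i ∧ (true,t2) ∈ TF (2*s) v i) ∨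
    (∃ k : Fin v, MEV s v k (false,t1) = (true,t2)) := by
  haveI : NeZero (2*s) := ⟨by omega⟩
  have hz : ((2*s : ℕ) : ZMod (2*s)) = 0 := ZMod.natCast_self _
  have hvlt1 := t1.val_lt
  have hvlt2 := t2.val_lt
  by_cases hc1 : t2 - t1 = 1
  · left
    refine ⟨⟨t1.val, by omega⟩, ?_, ?_⟩ <;>
      rw [TF_lo t1.val (by omega) (by omega), natCast_zmod_val, XT]
    · exact mem3_1 _ _ _
    · rw [show t2 = t1 + 1 by linear_combination hc1]
      exact mem3_2 _ _ _
  by_cases hc2 : t2 - t1 = 2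
  · left
    refine ⟨⟨t1.val, by omega⟩, ?_, ?_⟩ <;>
      rw [TF_lo t1.val (by omega) (by omega), natCast_zmod_val, XT]
    · exact mem3_1 _ _ _
    · rw [show t2 = t1 + 2 by linear_combination hc2]
      exact mem3_3 _ _ _
  by_cases hcm1 : t2 - t1 = -1
  · left
    refine ⟨⟨2*s + t2.val, by omega⟩, ?_, ?_⟩ <;>
      rw [TF_hi t2.val (by omega) (by omega), natCast_zmod_val, YT]
    · rw [show t1 = t2 + 1 by linear_combination -hcm1]
      exact mem3_2 _ _ _
    · exact mem3_1 _ _ _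
  by_cases hcm2 : t2 - t1 = -2
  · left
    refine ⟨⟨2*s + t2.val, by omega⟩, ?_, ?_⟩ <;>
      rw [TF_hi t2.val (by omega) (by omega), natCast_zmod_val, YT]
    · rw [show t1 = t2 + 2 by linear_combination -hcm2]
      exact mem3_3 _ _ _
    · exact mem3_1 _ _ _
  right
  by_cases hcS : t2 - t1 = ((s:ℕ) : ZMod (2*s))
  · refine ⟨⟨t1.val, by omega⟩, ?_⟩
    rw [MEV_lo t1.val (by omega) (by omega), natCast_zmod_val, rhoF_eval, sub_self,
      pEven_f0 hs]
    rw [Prod.mk.injEq]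
    exact ⟨rfl, by linear_combination -hcS⟩
  by_cases hcSg : t2 - t1 = ((s + (s+1)/2 : ℕ) : ZMod (2*s))
  · refine ⟨⟨(t1 - ((s:ℕ) : ZMod (2*s))).val,
      by have := (t1 - ((s:ℕ) : ZMod (2*s))).val_lt; omega⟩, ?_⟩
    rw [MEV_lo _ (by have := (t1 - ((s:ℕ) : ZMod (2*s))).val_lt; omega)
        (by have := (t1 - ((s:ℕ) : ZMod (2*s))).val_lt; omega), natCast_zmod_val, rhoF_eval,
      (show t1 - (t1 - ((s:ℕ) : ZMod (2*s))) = ((s:ℕ) : ZMod (2*s)) by ring), pEven_fs hs]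
    rw [Prod.mk.injEq]
    refine ⟨rfl, ?_⟩
    push_cast at hcSg hz ⊢
    linear_combination -hcSg - hz
  by_cases hcS1g : t2 - t1 = ((s + 1 - (s+1)/2 : ℕ) : ZMod (2*s))
  · refine ⟨⟨(t1 - (((s+1)/2 : ℕ) : ZMod (2*s))).val,
      by have := (t1 - (((s+1)/2:ℕ) : ZMod (2*s))).val_lt; omega⟩, ?_⟩
    rw [MEV_lo _ (by have := (t1 - (((s+1)/2:ℕ) : ZMod (2*s))).val_lt; omega)
        (by have := (t1 - (((s+1)/2:ℕ) : ZMod (2*s))).val_lt; omega), natCast_zmod_val, rhoF_eval,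
      (show t1 - (t1 - (((s+1)/2:ℕ) : ZMod (2*s))) = (((s+1)/2:ℕ) : ZMod (2*s)) by ring),
      pEven_fg hs]
    rw [Prod.mk.injEq]
    refine ⟨rfl, ?_⟩
    push_cast [Nat.cast_sub (show (s+1)/2 ≤ s + 1 by omega)] at hcS1g ⊢
    linear_combination -hcS1g
  by_cases hcSm1 : t2 - t1 = ((s - 1 : ℕ) : ZMod (2*s))
  · refine ⟨⟨(t1 - ((s+1 : ℕ) : ZMod (2*s))).val,
      by have := (t1 - ((s+1:ℕ) : ZMod (2*s))).val_lt; omega⟩, ?_⟩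
    rw [MEV_lo _ (by have := (t1 - ((s+1:ℕ) : ZMod (2*s))).val_lt; omega)
        (by have := (t1 - ((s+1:ℕ) : ZMod (2*s))).val_lt; omega), natCast_zmod_val, rhoF_eval,
      (show t1 - (t1 - ((s+1:ℕ) : ZMod (2*s))) = ((s+1:ℕ) : ZMod (2*s)) by ring),
      pEven_fs1 hs]
    rw [Prod.mk.injEq]
    refine ⟨rfl, ?_⟩
    push_cast [Nat.cast_sub (show (1:ℕ) ≤ s by omega)] at hcSm1 hz ⊢
    linear_combination -hcSm1 - hz
  -- pure crossing class
  set c := t2 - t1 with hcdef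
  have hval : c.val ∈ PE s := by
    apply mem_PE c.val (by have := c.val_lt; omega)
    · intro hc
      apply hc1
      have := (val_eq_cast_iff c 1 (by omega)).mp hc
      simpa using this
    · intro hc
      apply hc2
      have := (val_eq_cast_iff c 2 (by omega)).mp hc
      simpa using this
    · intro hc; exact hcSm1 ((val_eq_cast_iff c (s-1) (by omega)).mp hc)
    · intro hc; exact hcS ((val_eq_cast_iff c s (by omega)).mp hc)
    · intro hc; exact hcSg ((val_eq_cast_iff c (s + (s+1)/2) (by omega)).mp hc)
    · intro hc; exact hcS1g ((val_eq_cast_iff c (s+1-(s+1)/2) (by omega)).mp hc)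
    · intro hc
      apply hcm2
      rw [(val_eq_cast_iff c (2*s-2) (by omega)).mp hc]
      push_cast [Nat.cast_sub (show (2:ℕ) ≤ 2*s by omega)] at hz ⊢
      linear_combination hz
    · intro hc
      apply hcm1
      rw [(val_eq_cast_iff c (2*s-1) (by omega)).mp hc]
      push_cast [Nat.cast_sub (show (1:ℕ) ≤ 2*s by omega)] at hz ⊢
      linear_combination hz
  obtain ⟨j0, hj0, hget⟩ := enumF_surj (PE s) c.val hval
  rw [PE_card hs] at hj0
  refine ⟨⟨2*s+1 + j0, by omega⟩, ?_⟩
  rw [MEV_hi j0 (by omega), hget, natCast_zmod_val, muF_eval_f]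
  rw [Prod.mk.injEq]
  exact ⟨rfl, by linear_combination hcdef⟩

lemma rot_even_small (hs : 6 ≤ s) (hv : v + 7 = 2*(2*s)) (b : Bool) (t1 t2 : ZMod (2*s))
    (hpar : (t2 - t1).val % 2 = 0) (h2 : 2 ≤ (t2 - t1).val) (hlt : (t2 - t1).val < s) :
    ∃ k : Fin v, MEV s v k (b,t1) = (b,t2) := by
  haveI : NeZero (2*s) := ⟨by omega⟩
  set dv := (t2 - t1).val with hdv
  have hd : t2 = t1 + ((dv : ℕ) : ZMod (2*s)) := by
    rw [hdv, natCast_zmod_val]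
    ring
  set j : ZMod (2*s) := t1 + ((dv/2 : ℕ) : ZMod (2*s)) with hj
  refine ⟨⟨j.val, by have := j.val_lt; omega⟩, ?_⟩
  rw [MEV_lo j.val (by have := j.val_lt; omega) (by have := j.val_lt; omega), natCast_zmod_val,
    rhoF_eval, (show t1 - j = -((dv/2 : ℕ) : ZMod (2*s)) by rw [hj]; ring)]
  have huval : ((-((dv/2 : ℕ) : ZMod (2*s))).val) = 2*s - dv/2 :=
    neg_cast_val (dv/2) (by omega) (by omega)
  rw [pEven_neg hs b _ (by omega) (by omega)]
  rw [Prod.mk.injEq]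
  refine ⟨rfl, ?_⟩
  rw [hd, hj]
  have : (dv/2 : ℕ) + (dv/2 : ℕ) = dv := by omega
  rw [neg_neg, (show ((dv:ℕ) : ZMod (2*s)) = ((dv/2 : ℕ) : ZMod (2*s)) + ((dv/2 : ℕ) : ZMod (2*s))
    from by rw [← Nat.cast_add, this])]
  ring

lemma rot_odd_large (hs : 6 ≤ s) (hv : v + 7 = 2*(2*s)) (b : Bool) (t1 t2 : ZMod (2*s))
    (hpar : (t2 - t1).val % 2 = 1) (hge : s+1 ≤ (t2 - t1).val) (hle : (t2 - t1).val ≤ 2*s-3) :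
    ∃ k : Fin v, MEV s v k (b,t1) = (b,t2) := by
  haveI : NeZero (2*s) := ⟨by omega⟩
  set dv := (t2 - t1).val with hdv
  have hd : t2 = t1 + ((dv : ℕ) : ZMod (2*s)) := by
    rw [hdv, natCast_zmod_val]
    ring
  set w : ℕ := (dv - 1)/2 with hw
  have hw2 : 2*w + 1 = dv := by omega
  have hwrange : (s+1)/2 ≤ w ∧ w ≤ s - 2 := by omega
  set j : ZMod (2*s) := t1 + ((w : ℕ) : ZMod (2*s)) with hj
  refine ⟨⟨j.val, by have := j.val_lt; omega⟩, ?_⟩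
  rw [MEV_lo j.val (by have := j.val_lt; omega) (by have := j.val_lt; omega), natCast_zmod_val,
    rhoF_eval, (show t1 - j = -((w : ℕ) : ZMod (2*s)) by rw [hj]; ring)]
  have huval : ((-((w : ℕ) : ZMod (2*s))).val) = 2*s - w :=
    neg_cast_val w (by omega) (by omega)
  rw [pEven_sub hs b _ (by omega) (by omega) (by omega) (by omega)]
  rw [Prod.mk.injEq]
  refine ⟨rfl, ?_⟩
  dsimp only
  rw [hd, hj]
  rw [(show ((dv:ℕ) : ZMod (2*s)) = 1 + ((w : ℕ) : ZMod (2*s)) + ((w : ℕ) : ZMod (2*s))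
    from by rw [show (dv : ℕ) = 1 + w + w from by omega]; push_cast; ring)]
  ring

lemma cover_same_even (hs : 6 ≤ s) (hv : v + 7 = 2*(2*s)) (b : Bool) (t1 t2 : ZMod (2*s))
    (hne : t1 ≠ t2) :
    (∃ i, (b,t1) ∈ TF (2*s) v i ∧ (b,t2) ∈ TF (2*s) v i) ∨
    (∃ k : Fin v, MEV s v k (b,t1) = (b,t2)) := by
  haveI : NeZero (2*s) := ⟨by omega⟩
  have hz : ((2*s : ℕ) : ZMod (2*s)) = 0 := ZMod.natCast_self _
  have hd0 : t2 - t1 ≠ 0 := sub_ne_zero.mpr (Ne.symm hne)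
  by_cases hd1 : t2 - t1 = 1
  · left
    cases b
    · refine ⟨⟨2*s + (t1-1).val, by have := (t1-1).val_lt; omega⟩, ?_, ?_⟩ <;>
        rw [TF_hi (t1-1).val (by have := (t1-1).val_lt; omega)
          (by have := (t1-1).val_lt; omega), natCast_zmod_val, YT]
      · rw [show (false, t1) = ((false : Bool), t1 - 1 + 1) from by rw [Prod.mk.injEq]; exact ⟨rfl, by ring⟩]
        exact mem3_2 _ _ _
      · rw [show (false, t2) = ((false : Bool), t1 - 1 + 2) from by rw [Prod.mk.injEq]; exact ⟨rfl, by linear_combination hd1⟩]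
        exact mem3_3 _ _ _
    · refine ⟨⟨(t1-1).val, by have := (t1-1).val_lt; omega⟩, ?_, ?_⟩ <;>
        rw [TF_lo (t1-1).val (by have := (t1-1).val_lt; omega)
          (by have := (t1-1).val_lt; omega), natCast_zmod_val, XT]
      · rw [show (true, t1) = ((true : Bool), t1 - 1 + 1) from by rw [Prod.mk.injEq]; exact ⟨rfl, by ring⟩]
        exact mem3_2 _ _ _
      · rw [show (true, t2) = ((true : Bool), t1 - 1 + 2) from by rw [Prod.mk.injEq]; exact ⟨rfl, by linear_combination hd1⟩]
        exact mem3_3 _ _ _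
  by_cases hdm1 : t2 - t1 = -1
  · left
    cases b
    · refine ⟨⟨2*s + (t2-1).val, by have := (t2-1).val_lt; omega⟩, ?_, ?_⟩ <;>
        rw [TF_hi (t2-1).val (by have := (t2-1).val_lt; omega)
          (by have := (t2-1).val_lt; omega), natCast_zmod_val, YT]
      · rw [show (false, t1) = ((false : Bool), t2 - 1 + 2) from by rw [Prod.mk.injEq]; exact ⟨rfl, by linear_combination -hdm1⟩]
        exact mem3_3 _ _ _
      · rw [show (false, t2) = ((false : Bool), t2 - 1 + 1) from by rw [Prod.mk.injEq]; exact ⟨rfl, by ring⟩]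
        exact mem3_2 _ _ _
    · refine ⟨⟨(t2-1).val, by have := (t2-1).val_lt; omega⟩, ?_, ?_⟩ <;>
        rw [TF_lo (t2-1).val (by have := (t2-1).val_lt; omega)
          (by have := (t2-1).val_lt; omega), natCast_zmod_val, XT]
      · rw [show (true, t1) = ((true : Bool), t2 - 1 + 2) from by rw [Prod.mk.injEq]; exact ⟨rfl, by linear_combination -hdm1⟩]
        exact mem3_3 _ _ _
      · rw [show (true, t2) = ((true : Bool), t2 - 1 + 1) from by rw [Prod.mk.injEq]; exact ⟨rfl, by ring⟩]
        exact mem3_2 _ _ _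
  right
  by_cases hdS : t2 - t1 = ((s:ℕ) : ZMod (2*s))
  · refine ⟨⟨2*s, by omega⟩, ?_⟩
    rw [MEV_half (by omega)]
    rw [Prod.mk.injEq]
    exact ⟨rfl, by linear_combination -hdS⟩
  -- rotations
  have hvne0 : (t2 - t1).val ≠ 0 := fun hc => hd0 (by rwa [ZMod.val_eq_zero] at hc)
  have hvne1 : (t2 - t1).val ≠ 1 := by
    intro hc
    apply hd1
    have := (val_eq_cast_iff _ 1 (by omega)).mp hc
    simpa using this
  have hvnem1 : (t2 - t1).val ≠ 2*s-1 := by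
    intro hc
    apply hdm1
    rw [(val_eq_cast_iff _ (2*s-1) (by omega)).mp hc]
    push_cast [Nat.cast_sub (show (1:ℕ) ≤ 2*s by omega)] at hz ⊢
    linear_combination hz
  have hvneS : (t2 - t1).val ≠ s := by
    intro hc
    exact hdS ((val_eq_cast_iff _ s (by omega)).mp hc)
  have hvlt := (t2 - t1).val_lt
  have hswapval : (t1 - t2).val = 2*s - (t2 - t1).val := by
    rw [(show t1 - t2 = -(t2 - t1) by ring), ← natCast_zmod_val (t2 - t1),
      neg_cast_val _ (by omega) (by omega), ZMod.val_cast_of_lt (by omega)]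
  by_cases hpar : (t2 - t1).val % 2 = 0
  · by_cases hsmall : (t2 - t1).val < s
    · exact rot_even_small hs hv b t1 t2 hpar (by omega) hsmall
    · obtain ⟨k, hk⟩ := rot_even_small hs hv b t2 t1 (by omega) (by omega) (by omega)
      exact ⟨k, by rw [← hk, MEV_invol hs]⟩
  · by_cases hlarge : s+1 ≤ (t2 - t1).val
    · exact rot_odd_large hs hv b t1 t2 (by omega) hlarge (by omega)
    · obtain ⟨k, hk⟩ := rot_odd_large hs hv b t2 t1 (by omega) (by omega) (by omega)
      exact ⟨k, by rw [← hk, MEV_invol hs]⟩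

end EvenCase

-- caseOdd assembly (to be concatenated after all previous pieces)
lemma caseEven (s v : ℕ) (hs : 6 ≤ s) (hv : v + 7 = 2*(2*s)) :
    ∃ (T : Fin (v + 7) → Finset (Fin (v + 7)))
      (M : Fin v → Fin (v + 7) → Fin (v + 7)),
      (∀ i, (T i).card = 3) ∧
      (∀ k x, M k x ≠ x) ∧
      (∀ k x, M k (M k x) = x) ∧
      (∀ x y : Fin (v + 7), x ≠ y →
        (Finset.univ.filter (fun i => x ∈ T i ∧ y ∈ T i)).card +
        (Finset.univ.filter (fun k : Fin v => M k x = y)).card = 1) ∧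
      (∀ x, (Finset.univ.filter (fun i => x ∈ T i)).card = 3) := by
  haveI : NeZero (2*s) := ⟨by omega⟩
  have hcardV : Fintype.card (Bool × ZMod (2*s)) = v + 7 := by
    simp [ZMod.card]
    omega
  set e2 : (Bool × ZMod (2*s)) ≃ Fin (v+7) := Fintype.equivFinOfCardEq hcardV with he2
  set T' := TF (2*s) v with hT'
  set M' := MEV s v with hM'
  have hT3' : ∀ i, (T' i).card = 3 := fun i => TF_card (by omega) i
  have hM1' : ∀ k x, M' k x ≠ x := by
    intro k x
    rw [hM']
    exact MEV_ne hs k x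
  have hM2' : ∀ k x, M' k (M' k x) = x := by
    intro k x
    rw [hM']
    exact MEV_invol hs k x
  have hcov' : ∀ x y : Bool × ZMod (2*s), x ≠ y →
      (∃ i, x ∈ T' i ∧ y ∈ T' i) ∨ ∃ k, M' k x = y := by
    rintro ⟨b1, t1⟩ ⟨b2, t2⟩ hne
    match b1, b2 with
    | false, false =>
        exact cover_same_even hs hv false t1 t2 (fun h => hne (by rw [h]))
    | true, true =>
        exact cover_same_even hs hv true t1 t2 (fun h => hne (by rw [h]))
    | false, true => exact cover_cross_even hs hv t1 t2
    | true, false =>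
        rcases cover_cross_even hs hv t2 t1 with ⟨i, h1, h2⟩ | ⟨k, hk⟩
        · exact Or.inl ⟨i, h2, h1⟩
        · exact Or.inr ⟨k, by rw [← hk, hM2']⟩
  have hv3' : ∀ x : Bool × ZMod (2*s),
      3 ≤ (Finset.univ.filter (fun i => x ∈ T' i)).card := fun x => TF_deg (by omega) hv x
  -- transport along the equivalence
  set T : Fin (v+7) → Finset (Fin (v+7)) := fun i => (T' i).map e2.toEmbedding with hT
  set M : Fin v → Fin (v+7) → Fin (v+7) := fun k x => e2 (M' k (e2.symm x)) with hM
  have hmemT : ∀ (x : Fin (v+7)) (i : Fin (v+7)), x ∈ T i ↔ e2.symm x ∈ T' i := by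
    intro x i
    rw [hT]
    exact Finset.mem_map_equiv
  have hT3 : ∀ i, (T i).card = 3 := by
    intro i; rw [hT]; simpa using hT3' i
  have hM1 : ∀ k x, M k x ≠ x := by
    intro k x h
    rw [hM] at h
    exact hM1' k (e2.symm x) (by simpa using congrArg e2.symm h)
  have hM2 : ∀ k x, M k (M k x) = x := by
    intro k x
    rw [hM]
    simp only [Equiv.symm_apply_apply, hM2', Equiv.apply_symm_apply]
  have hcov : ∀ x y : Fin (v+7), x ≠ y →
      (∃ i, x ∈ T i ∧ y ∈ T i) ∨ ∃ k, M k x = y := by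
    intro x y hxy
    have hne' : e2.symm x ≠ e2.symm y := fun hc => hxy (e2.symm.injective hc)
    rcases hcov' (e2.symm x) (e2.symm y) hne' with ⟨i, h1, h2⟩ | ⟨k, hk⟩
    · exact Or.inl ⟨i, (hmemT x i).mpr h1, (hmemT y i).mpr h2⟩
    · refine Or.inr ⟨k, ?_⟩
      rw [hM]
      simp only [hk, Equiv.apply_symm_apply]
  have hv3 : ∀ x : Fin (v+7), 3 ≤ (Finset.univ.filter (fun i => x ∈ T i)).card := by
    intro x
    have : (Finset.univ.filter (fun i => x ∈ T i))
        = (Finset.univ.filter (fun i => e2.symm x ∈ T' i)) := by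
      apply Finset.filter_congr
      intro i _
      simp only [hmemT]
    rw [this]
    exact hv3' (e2.symm x)
  have main := main_abstract v (by simp) T M hT3 hM1 hM2 hcov hv3
  exact ⟨T, M, hT3, hM1, hM2, main.1, main.2⟩

def T8 : Fin 8 → Finset (Fin 8) := ![{0,1,3}, {1,2,4}, {2,3,5}, {3,4,6}, {4,5,7}, {0,5,6}, {1,6,7}, {0,2,7}]
def M8 : Fin 1 → Fin 8 → Fin 8 := ![![4,5,6,7,0,1,2,3]]

lemma case8 :
    ∃ (T : Fin (1 + 7) → Finset (Fin (1 + 7)))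
      (M : Fin 1 → Fin (1 + 7) → Fin (1 + 7)),
      (∀ i, (T i).card = 3) ∧
      (∀ k x, M k x ≠ x) ∧
      (∀ k x, M k (M k x) = x) ∧
      (∀ x y : Fin (1 + 7), x ≠ y →
        (Finset.univ.filter (fun i => x ∈ T i ∧ y ∈ T i)).card +
        (Finset.univ.filter (fun k : Fin 1 => M k x = y)).card = 1) ∧
      (∀ x, (Finset.univ.filter (fun i => x ∈ T i)).card = 3) := by
  have hT3 : ∀ i, (T8 i).card = 3 := by decide
  have hM1 : ∀ k x, M8 k x ≠ x := by decide
  have hM2 : ∀ k x, M8 k (M8 k x) = x := by decide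
  have hcov : ∀ x y : Fin 8, x ≠ y → (∃ i, x ∈ T8 i ∧ y ∈ T8 i) ∨ ∃ k, M8 k x = y := by decide
  have hv3 : ∀ x : Fin 8, 3 ≤ (Finset.univ.filter (fun i => x ∈ T8 i)).card := by decide
  have main := main_abstract 1 (by simp) T8 M8 hT3 hM1 hM2 hcov hv3
  exact ⟨T8, M8, hT3, hM1, hM2, main.1, main.2⟩

def T10 : Fin 10 → Finset (Fin 10) := ![{0,1,3}, {1,2,4}, {2,3,5}, {3,4,6}, {4,5,7}, {5,6,8}, {6,7,9}, {0,7,8}, {1,8,9}, {0,2,9}]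
def M10 : Fin 3 → Fin 10 → Fin 10 := ![![4,6,8,7,0,9,1,3,2,5], ![5,7,6,9,8,0,2,1,4,3], ![6,5,7,8,9,1,0,2,3,4]]

lemma case10 :
    ∃ (T : Fin (3 + 7) → Finset (Fin (3 + 7)))
      (M : Fin 3 → Fin (3 + 7) → Fin (3 + 7)),
      (∀ i, (T i).card = 3) ∧
      (∀ k x, M k x ≠ x) ∧
      (∀ k x, M k (M k x) = x) ∧
      (∀ x y : Fin (3 + 7), x ≠ y →
        (Finset.univ.filter (fun i => x ∈ T i ∧ y ∈ T i)).card +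
        (Finset.univ.filter (fun k : Fin 3 => M k x = y)).card = 1) ∧
      (∀ x, (Finset.univ.filter (fun i => x ∈ T i)).card = 3) := by
  have hT3 : ∀ i, (T10 i).card = 3 := by decide
  have hM1 : ∀ k x, M10 k x ≠ x := by decide
  have hM2 : ∀ k x, M10 k (M10 k x) = x := by decide
  have hcov : ∀ x y : Fin 10, x ≠ y → (∃ i, x ∈ T10 i ∧ y ∈ T10 i) ∨ ∃ k, M10 k x = y := by decide
  have hv3 : ∀ x : Fin 10, 3 ≤ (Finset.univ.filter (fun i => x ∈ T10 i)).card := by decide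
  have main := main_abstract 3 (by simp) T10 M10 hT3 hM1 hM2 hcov hv3
  exact ⟨T10, M10, hT3, hM1, hM2, main.1, main.2⟩

def T12 : Fin 12 → Finset (Fin 12) := ![{0,1,3}, {1,2,4}, {2,3,5}, {3,4,6}, {4,5,7}, {5,6,8}, {6,7,9}, {7,8,10}, {8,9,11}, {0,9,10}, {1,10,11}, {0,2,11}]
def M12 : Fin 5 → Fin 12 → Fin 12 := ![![4,5,8,9,0,1,10,11,2,3,6,7], ![6,7,10,11,8,9,0,1,4,5,2,3], ![8,9,6,7,10,11,2,3,0,1,4,5], ![5,8,7,10,9,0,11,2,1,4,3,6], ![7,6,9,8,11,10,1,0,3,2,5,4]]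

lemma case12 :
    ∃ (T : Fin (5 + 7) → Finset (Fin (5 + 7)))
      (M : Fin 5 → Fin (5 + 7) → Fin (5 + 7)),
      (∀ i, (T i).card = 3) ∧
      (∀ k x, M k x ≠ x) ∧
      (∀ k x, M k (M k x) = x) ∧
      (∀ x y : Fin (5 + 7), x ≠ y →
        (Finset.univ.filter (fun i => x ∈ T i ∧ y ∈ T i)).card +
        (Finset.univ.filter (fun k : Fin 5 => M k x = y)).card = 1) ∧
      (∀ x, (Finset.univ.filter (fun i => x ∈ T i)).card = 3) := by
  have hT3 : ∀ i, (T12 i).card = 3 := by decide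
  have hM1 : ∀ k x, M12 k x ≠ x := by decide
  have hM2 : ∀ k x, M12 k (M12 k x) = x := by decide
  have hcov : ∀ x y : Fin 12, x ≠ y → (∃ i, x ∈ T12 i ∧ y ∈ T12 i) ∨ ∃ k, M12 k x = y := by decide
  have hv3 : ∀ x : Fin 12, 3 ≤ (Finset.univ.filter (fun i => x ∈ T12 i)).card := by decide
  have main := main_abstract 5 (by simp) T12 M12 hT3 hM1 hM2 hcov hv3
  exact ⟨T12, M12, hT3, hM1, hM2, main.1, main.2⟩

def T16 : Fin 16 → Finset (Fin 16) := ![{0,3,5}, {2,5,7}, {4,7,9}, {6,9,11}, {8,11,13}, {10,13,15}, {1,12,15}, {1,3,14}, {1,2,4}, {3,4,6}, {5,6,8}, {7,8,10}, {9,10,12}, {11,12,14}, {0,13,14}, {0,2,15}]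
def M16 : Fin 9 → Fin 16 → Fin 16 := ![![7,5,14,8,13,1,12,0,3,15,11,10,6,4,2,9], ![4,11,9,7,0,10,15,3,14,2,5,1,13,12,8,6], ![10,8,6,13,11,9,2,12,1,5,0,4,7,3,15,14], ![1,0,12,10,8,15,13,11,4,14,3,7,2,6,9,5], ![11,7,3,2,14,12,10,1,15,13,6,0,5,9,4,8], ![6,10,13,9,5,4,0,14,12,3,1,15,8,2,7,11], ![9,13,8,12,15,11,7,6,2,0,14,5,3,1,10,4], ![12,6,11,15,10,14,1,13,9,8,4,2,0,7,5,3], ![8,9,10,11,12,13,14,15,0,1,2,3,4,5,6,7]]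

lemma case16 :
    ∃ (T : Fin (9 + 7) → Finset (Fin (9 + 7)))
      (M : Fin 9 → Fin (9 + 7) → Fin (9 + 7)),
      (∀ i, (T i).card = 3) ∧
      (∀ k x, M k x ≠ x) ∧
      (∀ k x, M k (M k x) = x) ∧
      (∀ x y : Fin (9 + 7), x ≠ y →
        (Finset.univ.filter (fun i => x ∈ T i ∧ y ∈ T i)).card +
        (Finset.univ.filter (fun k : Fin 9 => M k x = y)).card = 1) ∧
      (∀ x, (Finset.univ.filter (fun i => x ∈ T i)).card = 3) := by
  have hT3 : ∀ i, (T16 i).card = 3 := by decide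
  have hM1 : ∀ k x, M16 k x ≠ x := by decide
  have hM2 : ∀ k x, M16 k (M16 k x) = x := by decide
  have hcov : ∀ x y : Fin 16, x ≠ y → (∃ i, x ∈ T16 i ∧ y ∈ T16 i) ∨ ∃ k, M16 k x = y := by decide
  have hv3 : ∀ x : Fin 16, 3 ≤ (Finset.univ.filter (fun i => x ∈ T16 i)).card := by decide
  have main := main_abstract 9 (by simp) T16 M16 hT3 hM1 hM2 hcov hv3
  exact ⟨T16, M16, hT3, hM1, hM2, main.1, main.2⟩

def T20 : Fin 20 → Finset (Fin 20) := ![{0,3,5}, {2,5,7}, {4,7,9}, {6,9,11}, {8,11,13}, {10,13,15}, {12,15,17}, {14,17,19}, {1,16,19}, {1,3,18}, {1,2,4}, {3,4,6}, {5,6,8}, {7,8,10}, {9,10,12}, {11,12,14}, {13,14,16}, {15,16,18}, {0,17,18}, {0,2,19}]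
def M20 : Fin 13 → Fin 20 → Fin 20 := ![![11,9,18,7,16,12,15,3,14,1,17,0,5,19,8,6,4,10,2,13], ![4,15,13,11,0,9,18,14,17,5,16,3,19,2,7,1,10,8,6,12], ![8,14,6,17,15,13,2,11,0,16,19,7,18,5,1,4,9,3,12,10], ![14,12,10,16,8,19,17,15,4,13,2,18,1,9,0,7,3,6,11,5], ![13,7,16,14,12,18,10,1,19,17,6,15,4,0,3,11,2,9,5,8], ![7,10,15,9,18,16,14,0,12,3,1,19,8,17,6,2,5,13,4,11], ![6,13,9,12,17,11,0,18,16,2,14,5,3,1,10,19,8,4,7,15], ![9,17,8,15,11,14,19,13,2,0,18,4,16,7,5,3,12,1,10,6], ![12,8,11,19,10,17,13,16,1,15,4,2,0,6,18,9,7,5,14,3], ![16,5,14,10,13,1,12,19,15,18,3,17,6,4,2,8,0,11,9,7], ![10,11,12,13,14,15,16,17,18,19,0,1,2,3,4,5,6,7,8,9], ![1,0,3,2,5,4,7,6,9,8,11,10,13,12,15,14,17,16,19,18], ![15,6,17,8,19,10,1,12,3,14,5,16,7,18,9,0,11,2,13,4]]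

lemma case20 :
    ∃ (T : Fin (13 + 7) → Finset (Fin (13 + 7)))
      (M : Fin 13 → Fin (13 + 7) → Fin (13 + 7)),
      (∀ i, (T i).card = 3) ∧
      (∀ k x, M k x ≠ x) ∧
      (∀ k x, M k (M k x) = x) ∧
      (∀ x y : Fin (13 + 7), x ≠ y →
        (Finset.univ.filter (fun i => x ∈ T i ∧ y ∈ T i)).card +
        (Finset.univ.filter (fun k : Fin 13 => M k x = y)).card = 1) ∧
      (∀ x, (Finset.univ.filter (fun i => x ∈ T i)).card = 3) := by
  have hT3 : ∀ i, (T20 i).card = 3 := by decide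
  have hM1 : ∀ k x, M20 k x ≠ x := by decide
  have hM2 : ∀ k x, M20 k (M20 k x) = x := by decide
  have hcov : ∀ x y : Fin 20, x ≠ y → (∃ i, x ∈ T20 i ∧ y ∈ T20 i) ∨ ∃ k, M20 k x = y := by decide
  have hv3 : ∀ x : Fin 20, 3 ≤ (Finset.univ.filter (fun i => x ∈ T20 i)).card := by decide
  have main := main_abstract 13 (by simp) T20 M20 hT3 hM1 hM2 hcov hv3
  exact ⟨T20, M20, hT3, hM1, hM2, main.1, main.2⟩



/-- for odd v ≥ 1 the edges of K_{v+7} partition into v+7 triangles and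
v perfect matchings (each matching given by a fixed-point-free involution); in particular
every vertex lies in exactly three triangles. -/
theorem kv7_triangle_matching_decomposition (v : ℕ) (hodd : Odd v) (hv : 1 ≤ v) :
    ∃ (T : Fin (v + 7) → Finset (Fin (v + 7)))
      (M : Fin v → Fin (v + 7) → Fin (v + 7)),
      (∀ i, (T i).card = 3) ∧
      (∀ k x, M k x ≠ x) ∧
      (∀ k x, M k (M k x) = x) ∧
      (∀ x y : Fin (v + 7), x ≠ y →
        (Finset.univ.filter (fun i => x ∈ T i ∧ y ∈ T i)).card +
        (Finset.univ.filter (fun k : Fin v => M k x = y)).card = 1) ∧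
      (∀ x, (Finset.univ.filter (fun i => x ∈ T i)).card = 3) := by
  have hm2 : v % 2 = 1 := Nat.odd_iff.mp hodd
  by_cases h1 : v = 1
  · subst h1; exact case8
  by_cases h3 : v = 3
  · subst h3; exact case10
  by_cases h5 : v = 5
  · subst h5; exact case12
  by_cases h9 : v = 9
  · subst h9; exact case16
  by_cases h13 : v = 13
  · subst h13; exact case20
  by_cases hm : v % 4 = 3
  · exact caseOdd ((v+5)/4) v (by omega) (by omega)
  · exact caseEven ((v+7)/4) v (by omega) (by omega)
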